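/- arXiv:1610.03532 — 9 statements merged into one kernel-verified Lean document; each statement's English description precedes it below -/
import Mathlib

section
/- Let L be a complete lattice, X a nonempty set, μ : X → L. Define φ : μ_L → L^μ by φ(μ_p) = ⋀_{x ∈ μ_p} μ(x). Then φ is a well-defined order isomorphism from (μ_L, ⊇) onto (L^μ, ≤). -/
section aux
variable {X L : Type*} [CompleteLattice L] (μ : X → L)

/-- Key lemma: a cut is recovered from the infimum of its image. -/
lemma cut_eq_of_cut {p : L} : {x : X | p ≤ μ x} = {x : X | sInf (μ '' {x : X | p ≤ μ x}) ≤ μ x} := by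
  ext x
  constructor
  · intro hx
    exact sInf_le ⟨x, hx, rfl⟩
  · intro hx
    have hp : p ≤ sInf (μ '' {x : X | p ≤ μ x}) :=
      le_sInf (by rintro _ ⟨y, hy, rfl⟩; exact hy)
    exact hp.trans hx

lemma sInf_cut_eq {B : Set L} (hB : B ⊆ Set.range μ) :
    sInf (μ '' {x : X | sInf B ≤ μ x}) = sInf B := by
  apply le_antisymm
  · apply le_sInf
    intro b hb
    obtain ⟨x, rfl⟩ := hB hb
    exact sInf_le ⟨x, sInf_le hb, rfl⟩
  · exact le_sInf (by rintro _ ⟨y, hy, rfl⟩; exact hy)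

end aux

/-- the map `φ(μ_p) = ⋀_{x ∈ μ_p} μ(x)` is a well-defined order
isomorphism from `(μ_L, ⊇)` onto `(L^μ, ≤)`. -/
theorem cutFamily_orderIso_lmu {X L : Type*} [Nonempty X] [CompleteLattice L]
    (μ : X → L) :
    ∃ φ : (↥{s : Set X | ∃ p : L, s = {x : X | p ≤ μ x}})ᵒᵈ ≃o
        ↥{p : L | ∃ B ⊆ Set.range μ, p = sInf B},
      ∀ s : ↥{s : Set X | ∃ p : L, s = {x : X | p ≤ μ x}},
        (φ (OrderDual.toDual s) : L) = sInf (μ '' (s : Set X)) := by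
  refine ⟨⟨⟨fun s => ⟨sInf (μ '' ((OrderDual.ofDual s : _) : Set X)),
      μ '' ((OrderDual.ofDual s : _) : Set X), Set.image_subset_range μ _, rfl⟩,
    fun q => OrderDual.toDual ⟨{x : X | (q : L) ≤ μ x}, (q : L), rfl⟩, ?_, ?_⟩, ?_⟩,
    fun s => rfl⟩
  · -- left inverse
    intro s
    obtain ⟨s, p, rfl⟩ := s
    apply OrderDual.toDual.injective
    exact Subtype.ext (cut_eq_of_cut μ).symm
  · -- right inverse
    intro q
    obtain ⟨q, B, hB, rfl⟩ := q
    ext1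
    exact sInf_cut_eq μ hB
  · -- map_rel_iff'
    rintro ⟨a, p, rfl⟩ ⟨b, r, rfl⟩
    constructor
    · intro h x hx
      have h1 : sInf (μ '' {x : X | p ≤ μ x}) ≤ μ x :=
        le_trans h (sInf_le ⟨x, hx, rfl⟩)
      exact (Set.ext_iff.mp (cut_eq_of_cut (p := p) μ).symm x).mp h1
    · intro h
      exact le_sInf (by rintro _ ⟨y, hy, rfl⟩; exact sInf_le ⟨y, h hy, rfl⟩)
end

section
/- Let L be a complete lattice, X a nonempty set, μ : X → L, and let ν : X → L^μ be the corestriction of μ (ν(x) = μ(x), valued in the complete lattice L^μ). Then the family of cuts of ν (with respect to L^μ) equals the family of cuts of μ (with respect to L), and (L^μ)^ν = L^μ. -/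
/-- the corestriction `ν : X → L^μ` of `μ` has the same family of cuts
as `μ`, and `(L^μ)^ν = L^μ`. -/
theorem corestriction_cuts {X L : Type*} [Nonempty X] [CompleteLattice L]
    (μ : X → L)
    (ν : X → ↥{p : L | ∃ B ⊆ Set.range μ, p = sInf B})
    (hν : ∀ x, (ν x : L) = μ x) :
    {s : Set X | ∃ p, s = {x : X | p ≤ ν x}} =
      {s : Set X | ∃ p : L, s = {x : X | p ≤ μ x}} ∧
    {p : ↥{p : L | ∃ B ⊆ Set.range μ, p = sInf B} |
      ∃ B ⊆ Set.range ν, (p : L) = sInf ((↑) '' B)} = Set.univ := by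
  constructor
  · ext s
    simp only [Set.mem_setOf_eq]
    constructor
    · rintro ⟨p, rfl⟩
      exact ⟨(p : L), by ext x; simp [← hν x, ← Subtype.coe_le_coe]⟩
    · rintro ⟨p, rfl⟩
      set q : L := sInf (μ '' {x | p ≤ μ x}) with hq
      have hqmem : q ∈ {p : L | ∃ B ⊆ Set.range μ, p = sInf B} :=
        ⟨μ '' {x | p ≤ μ x}, Set.image_subset_range _ _, rfl⟩
      have hpq : p ≤ q := le_sInf (by rintro _ ⟨x, hx, rfl⟩; exact hx)
      refine ⟨⟨q, hqmem⟩, ?_⟩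
      ext x
      simp only [Set.mem_setOf_eq, ← Subtype.coe_le_coe, hν x]
      constructor
      · intro h
        exact sInf_le ⟨x, h, rfl⟩
      · intro h
        exact le_trans hpq h
  · ext p
    simp only [Set.mem_setOf_eq, Set.mem_univ, iff_true]
    obtain ⟨q, hq⟩ := p
    obtain ⟨B, hB, rfl⟩ := hq
    refine ⟨ν '' {x | μ x ∈ B}, Set.image_subset_range _ _, ?_⟩
    have : ((↑) : _ → L) '' (ν '' {x | μ x ∈ B}) = B := by
      ext b
      constructor
      · rintro ⟨_, ⟨x, hx, rfl⟩, rfl⟩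
        rw [hν x]; exact hx
      · intro hb
        obtain ⟨x, rfl⟩ := hB hb
        exact ⟨ν x, ⟨x, hb, rfl⟩, hν x⟩
    rw [this]
end

section
/- Let F be a family of subsets of a nonempty set X that is closed under arbitrary intersections and contains X, let L be a complete lattice, and let L₀ be a sub-poset of L such that (F, ⊇) ≅ (L₀, ≤) and the inclusion L₀ → L preserves all infima and the top element. Then there exists an L₀-fuzzy set ν : X → L₀ such that the family of cuts of ν equals F and (L₀)^ν = L₀. -/
/-- if `F` is intersection-closed, contains `X`, and `(F, ⊇) ≅ (L₀, ≤)`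
for a sub-poset `L₀ ⊆ L` whose inclusion preserves all infima and the top, then
there is an `L₀`-fuzzy set `ν : X → L₀` with cut family `F` and `(L₀)^ν = L₀`. -/
theorem exists_corestricted_fuzzy_set {X L : Type*} [Nonempty X] [CompleteLattice L]
    (F : Set (Set X)) (hXF : Set.univ ∈ F) (hInt : ∀ G ⊆ F, ⋂₀ G ∈ F)
    (L₀ : Set L) (htop : ⊤ ∈ L₀) (hinf : ∀ S ⊆ L₀, sInf S ∈ L₀)
    (hiso : Nonempty ((↥F)ᵒᵈ ≃o ↥L₀)) :
    ∃ ν : X → ↥L₀,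
      {s : Set X | ∃ p : ↥L₀, s = {x : X | p ≤ ν x}} = F ∧
      {p : ↥L₀ | ∃ B ⊆ Set.range ν, (p : L) = sInf ((↑) '' B)} = Set.univ := by
  obtain ⟨φ⟩ := hiso
  have hS : ∀ x : X, (⋂₀ {f ∈ F | x ∈ f}) ∈ F := fun x => hInt _ (fun f hf => hf.1)
  have hxS : ∀ x : X, x ∈ ⋂₀ {f ∈ F | x ∈ f} := fun x f hf => hf.2
  set Sx : X → ↥F := fun x => ⟨⋂₀ {f ∈ F | x ∈ f}, hS x⟩ with hSx
  set ν : X → ↥L₀ := fun x => φ (OrderDual.toDual (Sx x)) with hν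
  -- key lemma : membership in a set of `F` is equivalent to the cut condition
  have key : ∀ (x : X) (g : ↥F), φ (OrderDual.toDual g) ≤ ν x ↔ x ∈ (g : Set X) := by
    intro x g
    rw [hν]
    simp only
    rw [φ.le_iff_le]
    constructor
    · intro h
      exact h (hxS x)
    · intro hx y hy
      exact hy g ⟨g.2, hx⟩
  refine ⟨ν, ?_, ?_⟩
  · ext s
    constructor
    · rintro ⟨p, rfl⟩
      have hp : p = φ (OrderDual.toDual (OrderDual.ofDual (φ.symm p))) := by simp
      have hs : {x : X | p ≤ ν x} = ((OrderDual.ofDual (φ.symm p) : ↥F) : Set X) := by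
        ext x
        rw [Set.mem_setOf_eq]; nth_rewrite 1 [hp]
        exact key x _
      rw [hs]
      exact (OrderDual.ofDual (φ.symm p) : ↥F).2
    · intro hs
      refine ⟨φ (OrderDual.toDual ⟨s, hs⟩), ?_⟩
      ext x
      exact (key x ⟨s, hs⟩).symm
  · ext p
    simp only [Set.mem_setOf_eq, Set.mem_univ, iff_true]
    set g : ↥F := OrderDual.ofDual (φ.symm p) with hg
    have hpg : p = φ (OrderDual.toDual g) := by simp [hg]
    refine ⟨ν '' (g : Set X), ?_, ?_⟩
    · rintro q ⟨x, _, rfl⟩; exact ⟨x, rfl⟩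
    · apply le_antisymm
      · apply le_sInf
        rintro q ⟨r, ⟨x, hx, rfl⟩, rfl⟩
        have hle : p ≤ ν x := by rw [hpg]; exact (key x g).mpr hx
        exact hle
      · set q : L := sInf ((↑) '' (ν '' (g : Set X))) with hq
        have hqL₀ : q ∈ L₀ := hinf _ (by rintro r ⟨r', _, rfl⟩; exact r'.2)
        have hgh : (g : Set X) ⊆ ((OrderDual.ofDual (φ.symm ⟨q, hqL₀⟩) : ↥F) : Set X) := by
          intro x hx
          have hqν : (⟨q, hqL₀⟩ : ↥L₀) ≤ ν x := by
            show q ≤ (ν x : L)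
            exact sInf_le ⟨ν x, ⟨x, hx, rfl⟩, rfl⟩
          have := φ.symm.le_iff_le.mpr hqν
          rw [hν] at this
          simp only [φ.symm_apply_apply] at this
          exact this (hxS x)
        have : φ.symm ⟨q, hqL₀⟩ ≤ φ.symm p := hgh
        have h2 := φ.le_iff_le.mpr this
        exact (by simpa using h2 : (⟨q, hqL₀⟩ : ↥L₀) ≤ p)
end

section
/- Under the hypotheses of the previous statement, the composite μ = ι ∘ ν (where ι : L₀ → L is the inclusion and ν : X → L₀ has cut family F with (L₀)^ν = L₀) satisfies: the family of cuts of μ with respect to L equals F, and L^μ = L₀. -/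
/-- under the hypotheses of Statement 9, the composite `μ = ι ∘ ν`
of `ν` with the inclusion `ι : L₀ → L` has cut family (w.r.t. `L`) equal to `F`
and satisfies `L^μ = L₀`. -/
theorem composite_with_inclusion {X L : Type*} [Nonempty X] [CompleteLattice L]
    (F : Set (Set X)) (hXF : Set.univ ∈ F) (hInt : ∀ G ⊆ F, ⋂₀ G ∈ F)
    (L₀ : Set L) (htop : ⊤ ∈ L₀) (hinf : ∀ S ⊆ L₀, sInf S ∈ L₀)
    (hiso : Nonempty ((↥F)ᵒᵈ ≃o ↥L₀))
    (ν : X → ↥L₀)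
    (hν₁ : {s : Set X | ∃ p : ↥L₀, s = {x : X | p ≤ ν x}} = F)
    (hν₂ : {p : ↥L₀ | ∃ B ⊆ Set.range ν, (p : L) = sInf ((↑) '' B)} = Set.univ)
    (μ : X → L) (hμ : ∀ x, μ x = (ν x : L)) :
    {s : Set X | ∃ p : L, s = {x : X | p ≤ μ x}} = F ∧
    {p : L | ∃ B ⊆ Set.range μ, p = sInf B} = L₀ := by
  constructor
  · ext s
    constructor
    · rintro ⟨p, rfl⟩
      rw [← hν₁]
      refine ⟨⟨sInf {r ∈ L₀ | p ≤ r}, hinf _ (fun r hr => hr.1)⟩, ?_⟩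
      ext x
      simp only [Set.mem_setOf_eq, hμ, ← Subtype.coe_le_coe]
      constructor
      · intro h
        exact le_trans (sInf_le ⟨(ν x).2, h⟩) le_rfl
      · intro h
        exact le_trans (le_sInf fun r hr => hr.2) h
    · intro hs
      rw [← hν₁] at hs
      obtain ⟨p, rfl⟩ := hs
      refine ⟨(p : L), ?_⟩
      ext x
      simp [hμ, ← Subtype.coe_le_coe]
  · ext p
    constructor
    · rintro ⟨B, hB, rfl⟩
      apply hinf
      intro b hb
      obtain ⟨x, hx⟩ := hB hb
      rw [← hx, hμ]; exact (ν x).2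
    · intro hp
      obtain ⟨B, hB, h⟩ : (⟨p, hp⟩ : ↥L₀) ∈
          {q : ↥L₀ | ∃ B ⊆ Set.range ν, (q : L) = sInf ((↑) '' B)} := by
        rw [hν₂]; trivial
      refine ⟨(↑) '' B, ?_, h⟩
      rintro _ ⟨q, hq, rfl⟩
      obtain ⟨x, rfl⟩ := hB hq
      exact ⟨x, hμ x⟩
end

section
/- Let F be a family of subsets of a nonempty set X closed under arbitrary intersections and containing X, and let L be a complete lattice. Define N(L, F) = { f : X → L : the family of cuts of f equals F } and S(L, F) = { L₀ ⊆ L : the inclusion L₀ → L preserves all infima and the top element, and (L₀, ≤) ≅ (F, ⊇) }. Then N(L, F) = ⋃_{L₀ ∈ S(L, F)} H(L, L₀, F), where H(L, L₀, F) = { μ : X → L : L^μ = L₀ and μ_L = F }. -/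
/-- Characterization of elements of `L^f`. -/
lemma memL0_iff {X L : Type*} [CompleteLattice L] (f : X → L) (p : L) :
    (∃ B ⊆ Set.range f, p = sInf B) ↔ p = sInf (f '' {x | p ≤ f x}) := by
  constructor
  · rintro ⟨B, hB, rfl⟩
    refine le_antisymm (le_sInf ?_) (sInf_le_sInf ?_)
    · rintro b ⟨x, hx, rfl⟩; exact hx
    · intro b hb
      obtain ⟨x, rfl⟩ := hB hb
      exact ⟨x, sInf_le hb, rfl⟩
  · intro h
    exact ⟨f '' {x | p ≤ f x}, Set.image_subset_range _ _, h⟩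

/-- `N(L, F) = ⋃_{L₀ ∈ S(L, F)} H(L, L₀, F)`. -/
theorem n_eq_union_h {X L : Type*} [Nonempty X] [CompleteLattice L]
    (F : Set (Set X)) (hXF : Set.univ ∈ F) (hInt : ∀ G ⊆ F, ⋂₀ G ∈ F) :
    {f : X → L | {s : Set X | ∃ p : L, s = {x : X | p ≤ f x}} = F} =
      ⋃ L₀ ∈ {L₀ : Set L | (⊤ ∈ L₀ ∧ ∀ S ⊆ L₀, sInf S ∈ L₀) ∧
          Nonempty ((↥F)ᵒᵈ ≃o ↥L₀)},
        {f : X → L | {p : L | ∃ B ⊆ Set.range f, p = sInf B} = L₀ ∧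
          {s : Set X | ∃ p : L, s = {x : X | p ≤ f x}} = F} := by
  ext f
  simp only [Set.mem_setOf_eq, Set.mem_iUnion, exists_prop]
  constructor
  · intro hF
    set L₀ : Set L := {p : L | ∃ B ⊆ Set.range f, p = sInf B} with hL₀
    have hcut : ∀ p : L, {x | p ≤ f x} ∈ F := fun p => hF ▸ ⟨p, rfl⟩
    have hmem : ∀ p : L, p ∈ L₀ ↔ p = sInf (f '' {x | p ≤ f x}) :=
      fun p => memL0_iff f p
    have hle : ∀ p : L, p ≤ sInf (f '' {x | p ≤ f x}) := by
      intro p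
      refine le_sInf ?_
      rintro b ⟨x, hx, rfl⟩; exact hx
    have key : ∀ p : L, {x | sInf (f '' {x | p ≤ f x}) ≤ f x} = {x | p ≤ f x} := by
      intro p
      ext x
      constructor
      · intro h; exact (hle p).trans h
      · intro hx; exact sInf_le ⟨x, hx, rfl⟩
    refine ⟨L₀, ⟨⟨⟨∅, Set.empty_subset _, sInf_empty.symm⟩, ?_⟩, ?_⟩, rfl, hF⟩
    · -- closed under infima
      intro S hS
      rw [hmem]
      refine le_antisymm (hle _) (le_sInf ?_)
      intro p hp
      have hp' := (hmem p).mp (hS hp)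
      calc sInf (f '' {x | sInf S ≤ f x}) ≤ sInf (f '' {x | p ≤ f x}) := by
            refine sInf_le_sInf (Set.image_mono ?_)
            intro x hx
            exact le_trans (sInf_le hp) hx
        _ = p := hp'.symm
    · -- order isomorphism
      refine ⟨{
        toFun := fun s => ⟨sInf (f '' ((OrderDual.ofDual s : ↥F) : Set X)),
          ⟨f '' _, Set.image_subset_range _ _, rfl⟩⟩
        invFun := fun p => OrderDual.toDual ⟨{x | (p : L) ≤ f x}, hcut p⟩
        left_inv := ?_
        right_inv := ?_
        map_rel_iff' := ?_ }⟩
      · intro s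
        obtain ⟨q, hq⟩ : ∃ q : L, ((OrderDual.ofDual s : ↥F) : Set X) = {x | q ≤ f x} := by
          have h2 : ((OrderDual.ofDual s : ↥F) : Set X)
              ∈ {s : Set X | ∃ p : L, s = {x : X | p ≤ f x}} := by
            rw [hF]; exact (OrderDual.ofDual s : ↥F).2
          exact h2
        apply OrderDual.ofDual.injective
        apply Subtype.ext
        show {x | sInf (f '' ((OrderDual.ofDual s : ↥F) : Set X)) ≤ f x}
            = ((OrderDual.ofDual s : ↥F) : Set X)
        rw [hq]
        exact key q
      · intro p
        apply Subtype.ext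
        exact ((hmem p).mp p.2).symm
      · intro s t
        obtain ⟨q, hq⟩ : ∃ q : L, ((OrderDual.ofDual s : ↥F) : Set X) = {x | q ≤ f x} := by
          have h2 : ((OrderDual.ofDual s : ↥F) : Set X)
              ∈ {s : Set X | ∃ p : L, s = {x : X | p ≤ f x}} := by
            rw [hF]; exact (OrderDual.ofDual s : ↥F).2
          exact h2
        constructor
        · intro h
          show ((OrderDual.ofDual t : ↥F) : Set X) ⊆ ((OrderDual.ofDual s : ↥F) : Set X)
          have h' : sInf (f '' ((OrderDual.ofDual s : ↥F) : Set X))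
              ≤ sInf (f '' ((OrderDual.ofDual t : ↥F) : Set X)) := h
          intro x hx
          rw [hq]
          have h1 : q ≤ sInf (f '' ((OrderDual.ofDual s : ↥F) : Set X)) := by
            rw [hq]; exact hle q
          exact h1.trans (h'.trans (sInf_le ⟨x, hx, rfl⟩))
        · intro h
          have h' : ((OrderDual.ofDual t : ↥F) : Set X)
              ⊆ ((OrderDual.ofDual s : ↥F) : Set X) := h
          exact sInf_le_sInf (Set.image_mono h')
  · rintro ⟨L₀, -, -, hF⟩
    exact hF
end

section
/- Let L₀ be a complete lattice, X a nonempty set, F a family of subsets of X closed under arbitrary intersections with X ∈ F, and suppose g : X → L₀ satisfies L₀^g = L₀ and g's cut family equals F. If f : X → L₀ also satisfies L₀^f = L₀ and f's cut family equals F, then there exists an order isomorphism η : L₀ → L₀ with f = η ∘ g. -/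
/-- Recovery: if every element of `L₀` is an inf of a subset of `range h`,
then `p` is the inf of `h` over its cut. -/
lemma recover_aux {X L₀ : Type*} [CompleteLattice L₀] (h : X → L₀)
    (h1 : {p : L₀ | ∃ B ⊆ Set.range h, p = sInf B} = Set.univ) (p : L₀) :
    sInf (h '' {x | p ≤ h x}) = p := by
  apply le_antisymm
  · obtain ⟨B, hB, hpB⟩ : ∃ B ⊆ Set.range h, p = sInf B :=
      h1.ge (Set.mem_univ p)
    rw [hpB]
    apply sInf_le_sInf
    intro b hb
    obtain ⟨x, rfl⟩ := hB hb
    exact ⟨x, sInf_le hb, rfl⟩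
  · apply le_sInf
    rintro q ⟨x, hx, rfl⟩
    exact hx

/-- The cut of `h x` is the smallest member of `F` containing `x`. -/
lemma cutmin_aux {X L₀ : Type*} [CompleteLattice L₀] (F : Set (Set X)) (h : X → L₀)
    (h2 : {s : Set X | ∃ p : L₀, s = {x : X | p ≤ h x}} = F) (x : X) :
    {y | h x ≤ h y} = ⋂₀ {S | S ∈ F ∧ x ∈ S} := by
  apply Set.Subset.antisymm
  · intro y hy S ⟨hSF, hxS⟩
    obtain ⟨p, rfl⟩ : ∃ p : L₀, S = {z : X | p ≤ h z} := h2.ge hSF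
    exact le_trans hxS hy
  · intro y hy
    exact hy {z | h x ≤ h z} ⟨h2.le ⟨h x, rfl⟩, le_refl _⟩

/-- if `f, g : X → L₀` both satisfy `L₀^h = L₀` and have cut family
`F`, then `f = η ∘ g` for some order isomorphism `η` of `L₀`. -/
theorem exists_orderIso_comp {X L₀ : Type*} [Nonempty X] [CompleteLattice L₀]
    (F : Set (Set X)) (hXF : Set.univ ∈ F) (hInt : ∀ G ⊆ F, ⋂₀ G ∈ F)
    (g f : X → L₀)
    (hg₁ : {p : L₀ | ∃ B ⊆ Set.range g, p = sInf B} = Set.univ)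
    (hg₂ : {s : Set X | ∃ p : L₀, s = {x : X | p ≤ g x}} = F)
    (hf₁ : {p : L₀ | ∃ B ⊆ Set.range f, p = sInf B} = Set.univ)
    (hf₂ : {s : Set X | ∃ p : L₀, s = {x : X | p ≤ f x}} = F) :
    ∃ η : L₀ ≃o L₀, f = ⇑η ∘ g := by
  set e : L₀ → L₀ := fun p => sInf (f '' {x | p ≤ g x}) with he
  set e' : L₀ → L₀ := fun q => sInf (g '' {x | q ≤ f x}) with he'
  -- key: the e-image has the same cut w.r.t. f
  have key : ∀ p : L₀, {x | e p ≤ f x} = {x | p ≤ g x} := by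
    intro p
    have hmem : {x | p ≤ g x} ∈ F := hg₂.le ⟨p, rfl⟩
    obtain ⟨q, hq⟩ : ∃ q : L₀, {x : X | p ≤ g x} = {x : X | q ≤ f x} := hf₂.ge hmem
    have : e p = q := by
      rw [he]; simp only; rw [hq, recover_aux f hf₁]
    rw [this, hq]
  have key' : ∀ q : L₀, {x | e' q ≤ g x} = {x | q ≤ f x} := by
    intro q
    have hmem : {x | q ≤ f x} ∈ F := hf₂.le ⟨q, rfl⟩
    obtain ⟨p, hp⟩ : ∃ p : L₀, {x : X | q ≤ f x} = {x : X | p ≤ g x} := hg₂.ge hmem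
    have : e' q = p := by
      rw [he']; simp only; rw [hp, recover_aux g hg₁]
    rw [this, hp]
  have left_inv : ∀ p, e' (e p) = p := by
    intro p
    rw [he']; simp only; rw [key p, recover_aux g hg₁]
  have right_inv : ∀ q, e (e' q) = q := by
    intro q
    rw [he]; simp only; rw [key' q, recover_aux f hf₁]
  have emono : Monotone e := by
    intro p q hpq
    apply sInf_le_sInf
    exact Set.image_mono (fun x hx => le_trans hpq hx)
  have e'mono : Monotone e' := by
    intro p q hpq
    apply sInf_le_sInf
    exact Set.image_mono (fun x hx => le_trans hpq hx)
  refine ⟨⟨⟨e, e', left_inv, right_inv⟩, ?_⟩, ?_⟩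
  · intro p q
    constructor
    · intro hpq
      have := e'mono hpq
      simp only [Equiv.coe_fn_mk] at this
      rwa [left_inv, left_inv] at this
    · exact fun hpq => emono hpq
  · funext x
    show f x = e (g x)
    have hcut : {y | g x ≤ g y} = {y | f x ≤ f y} := by
      rw [cutmin_aux F g hg₂ x, cutmin_aux F f hf₂ x]
    rw [he]; simp only; rw [hcut, recover_aux f hf₁]
end

section
/- Let L₀ be a complete lattice, X nonempty, and f, g : X → L₀ with L₀^f = L₀^g = L₀ and equal cut families. Define η : L₀ → L₀ by η(t) = ⋀_{x ∈ g_t} f(x), where g_t = {x : g(x) ≥ t}. Then η is an order isomorphism of L₀ whose inverse is η₁(t) = ⋀_{x ∈ f_t} g(x), and f = η ∘ g. -/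
/-- for `f, g` with `L₀^f = L₀^g = L₀` and equal cut families, the
map `η t = ⋀_{x ∈ g_t} f(x)` is an order isomorphism of `L₀` with inverse
`η₁ t = ⋀_{x ∈ f_t} g(x)`, and `f = η ∘ g`. -/
theorem eta_orderIso {X L₀ : Type*} [Nonempty X] [CompleteLattice L₀]
    (f g : X → L₀)
    (hf : {p : L₀ | ∃ B ⊆ Set.range f, p = sInf B} = Set.univ)
    (hg : {p : L₀ | ∃ B ⊆ Set.range g, p = sInf B} = Set.univ)
    (hcut : {s : Set X | ∃ t : L₀, s = {x : X | t ≤ f x}} =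
      {s : Set X | ∃ t : L₀, s = {x : X | t ≤ g x}})
    (η η₁ : L₀ → L₀)
    (hη : ∀ t, η t = sInf (f '' {x : X | t ≤ g x}))
    (hη₁ : ∀ t, η₁ t = sInf (g '' {x : X | t ≤ f x})) :
    Monotone η ∧ Monotone η₁ ∧ η₁ ∘ η = id ∧ η ∘ η₁ = id ∧ f = η ∘ g := by
  have key : ∀ (h : X → L₀), {p : L₀ | ∃ B ⊆ Set.range h, p = sInf B} = Set.univ →
      ∀ t : L₀, sInf (h '' {x | t ≤ h x}) = t := by
    intro h hh t
    have ht : t ∈ {p : L₀ | ∃ B ⊆ Set.range h, p = sInf B} := by rw [hh]; trivial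
    obtain ⟨B, hB, rfl⟩ := ht
    apply le_antisymm
    · apply sInf_le_sInf
      intro b hb
      obtain ⟨x, rfl⟩ := hB hb
      exact ⟨x, sInf_le hb, rfl⟩
    · exact le_sInf (fun b ⟨x, hx, hxb⟩ => hxb ▸ hx)
  have kf := key f hf
  have kg := key g hg
  have cut1 : ∀ t : L₀, ∃ t' : L₀, {x : X | t ≤ g x} = {x : X | t' ≤ f x} := by
    intro t
    have : {x : X | t ≤ g x} ∈ {s : Set X | ∃ t : L₀, s = {x : X | t ≤ f x}} := by
      rw [hcut]; exact ⟨t, rfl⟩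
    exact this
  have cut2 : ∀ t : L₀, ∃ t' : L₀, {x : X | t ≤ f x} = {x : X | t' ≤ g x} := by
    intro t
    have : {x : X | t ≤ f x} ∈ {s : Set X | ∃ t : L₀, s = {x : X | t ≤ g x}} := by
      rw [← hcut]; exact ⟨t, rfl⟩
    exact this
  have inv1 : ∀ t, η₁ (η t) = t := by
    intro t
    obtain ⟨t', ht'⟩ := cut1 t
    have h1 : η t = t' := by rw [hη, ht', kf]
    rw [h1, hη₁, ← ht', kg]
  have inv2 : ∀ t, η (η₁ t) = t := by
    intro t
    obtain ⟨t', ht'⟩ := cut2 t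
    have h1 : η₁ t = t' := by rw [hη₁, ht', kg]
    rw [h1, hη, ← ht', kf]
  refine ⟨?_, ?_, funext inv1, funext inv2, ?_⟩
  · intro a b hab
    rw [hη, hη]
    exact sInf_le_sInf (Set.image_mono (fun x hx => le_trans hab hx))
  · intro a b hab
    rw [hη₁, hη₁]
    exact sInf_le_sInf (Set.image_mono (fun x hx => le_trans hab hx))
  · funext x
    rw [Function.comp_apply, hη]
    apply le_antisymm
    · obtain ⟨s, hs⟩ := cut2 (f x)
      have hxs : s ≤ g x := by
        have : x ∈ {y : X | f x ≤ f y} := le_refl (f x)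
        rw [hs] at this; exact this
      apply le_sInf
      rintro b ⟨y, hy, rfl⟩
      have : y ∈ {y : X | s ≤ g y} := le_trans hxs hy
      rw [← hs] at this; exact this
    · exact sInf_le ⟨x, le_refl _, rfl⟩
end

section
/- Let F be a family of subsets of a nonempty set X closed under arbitrary intersections with X ∈ F, and let L be a complete lattice. Then the cardinality of N(L, F) = { f : X → L : cut family of f equals F } equals |S(L, F)| · |OI(F)|, where S(L, F) is the set of subsets L₀ of L such that the inclusion L₀ → L preserves all infima and the top element and (L₀, ≤) ≅ (F, ⊇), and OI(F) is the set of order automorphisms of (F, ⊇). -/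
universe u

namespace Card17

variable {X L : Type u}

def cl (F : Set (Set X)) (x : X) : Set X := ⋂₀ {s | s ∈ F ∧ x ∈ s}

lemma cl_mem (F : Set (Set X)) (hInt : ∀ G ⊆ F, ⋂₀ G ∈ F) (x : X) : cl F x ∈ F :=
  hInt _ (fun _ hs => hs.1)

lemma mem_cl (F : Set (Set X)) (x : X) : x ∈ cl F x :=
  fun _ hs => hs.2

lemma cl_subset (F : Set (Set X)) {x : X} {s : Set X} (hs : s ∈ F) (hx : x ∈ s) :
    cl F x ⊆ s := Set.sInter_subset_of_mem ⟨hs, hx⟩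

variable [CompleteLattice L]

def g (f : X → L) (s : Set X) : L := sInf (f '' s)

lemma g_le (f : X → L) {s : Set X} {x : X} (hx : x ∈ s) : g f s ≤ f x :=
  sInf_le ⟨x, hx, rfl⟩

lemma le_g (f : X → L) {s : Set X} {p : L} (h : ∀ x ∈ s, p ≤ f x) : p ≤ g f s :=
  le_sInf (by rintro a ⟨x, hx, rfl⟩; exact h x hx)

lemma g_anti (f : X → L) {s t : Set X} (h : s ⊆ t) : g f t ≤ g f s :=
  sInf_le_sInf (Set.image_mono h)

lemma cut_g {f : X → L} {F : Set (Set X)}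
    (hf : {s : Set X | ∃ p : L, s = {x | p ≤ f x}} = F) {s : Set X} (hs : s ∈ F) :
    {x | g f s ≤ f x} = s := by
  rw [← hf] at hs
  obtain ⟨p, rfl⟩ := hs
  ext x
  simp only [Set.mem_setOf_eq]
  exact ⟨fun h => le_trans (le_g f (fun y hy => hy)) h, fun h => g_le f h⟩

def rng (f : X → L) (F : Set (Set X)) : Set L := g f '' F

lemma top_mem_rng {f : X → L} {F : Set (Set X)}
    (hf : {s : Set X | ∃ p : L, s = {x | p ≤ f x}} = F) : ⊤ ∈ rng f F := by
  refine ⟨{x | (⊤ : L) ≤ f x}, by rw [← hf]; exact ⟨⊤, rfl⟩, ?_⟩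
  exact le_antisymm le_top (le_g f (fun x hx => hx))

lemma sInf_mem_rng {f : X → L} {F : Set (Set X)}
    (hf : {s : Set X | ∃ p : L, s = {x | p ≤ f x}} = F) {S : Set L}
    (hS : S ⊆ rng f F) : sInf S ∈ rng f F := by
  refine ⟨{x | sInf S ≤ f x}, by rw [← hf]; exact ⟨_, rfl⟩, le_antisymm ?_ ?_⟩
  · apply le_sInf; intro a ha
    obtain ⟨s, hsF, rfl⟩ := hS ha
    exact g_anti f (fun x hx => le_trans (sInf_le ha) (g_le f hx))
  · exact le_g f (fun x hx => hx)

noncomputable def gIso (f : X → L) (F : Set (Set X))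
    (hf : {s : Set X | ∃ p : L, s = {x | p ≤ f x}} = F) :
    (↥F)ᵒᵈ ≃o ↥(rng f F) where
  toEquiv := Equiv.ofBijective
    (fun s => ⟨g f (OrderDual.ofDual s).1, ⟨_, (OrderDual.ofDual s).2, rfl⟩⟩)
    (by
      constructor
      · intro s t h
        have h' : g f (OrderDual.ofDual s).1 = g f (OrderDual.ofDual t).1 :=
          congrArg Subtype.val h
        have : ((OrderDual.ofDual s : ↥F) : Set X) = (OrderDual.ofDual t : ↥F) := by
          rw [← cut_g hf (OrderDual.ofDual s).2, ← cut_g hf (OrderDual.ofDual t).2, h']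
        exact OrderDual.ofDual.injective (Subtype.ext this)
      · rintro ⟨a, s, hs, rfl⟩
        exact ⟨OrderDual.toDual ⟨s, hs⟩, rfl⟩)
  map_rel_iff' := by
    intro a b
    change g f (OrderDual.ofDual a).1 ≤ g f (OrderDual.ofDual b).1 ↔
      (OrderDual.ofDual b).1 ≤ (OrderDual.ofDual a).1
    constructor
    · intro h x hx
      have hbx : g f (OrderDual.ofDual b).1 ≤ f x := g_le f hx
      have hx' : x ∈ {y | g f (OrderDual.ofDual a).1 ≤ f y} := le_trans h hbx
      rw [cut_g hf (OrderDual.ofDual a).2] at hx'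
      exact hx'
    · intro h
      exact g_anti f h

lemma gIso_coe (f : X → L) (F : Set (Set X))
    (hf : {s : Set X | ∃ p : L, s = {x | p ≤ f x}} = F) (s : (↥F)ᵒᵈ) :
    (gIso f F hf s : L) = g f (OrderDual.ofDual s).1 := rfl

-- reverse construction
noncomputable def bf (F : Set (Set X)) (hInt : ∀ G ⊆ F, ⋂₀ G ∈ F) {L₀ : Set L}
    (ψ : (↥F)ᵒᵈ ≃o ↥L₀) : X → L :=
  fun x => (ψ (OrderDual.toDual ⟨cl F x, cl_mem F hInt x⟩) : L)

lemma bf_mem (F : Set (Set X)) (hInt : ∀ G ⊆ F, ⋂₀ G ∈ F) {L₀ : Set L}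
    (ψ : (↥F)ᵒᵈ ≃o ↥L₀) (x : X) : bf F hInt ψ x ∈ L₀ :=
  (ψ _).2

lemma cut_bf (F : Set (Set X)) (hInt : ∀ G ⊆ F, ⋂₀ G ∈ F) {L₀ : Set L}
    (ψ : (↥F)ᵒᵈ ≃o ↥L₀) (s : Set X) (hs : s ∈ F) :
    {x | (ψ (OrderDual.toDual ⟨s, hs⟩) : L) ≤ bf F hInt ψ x} = s := by
  ext x
  simp only [Set.mem_setOf_eq, bf]
  rw [Subtype.coe_le_coe, ψ.le_iff_le, OrderDual.toDual_le_toDual, Subtype.mk_le_mk]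
  exact ⟨fun h => h (mem_cl F x), fun h => cl_subset F hs h⟩

lemma cuts_bf (F : Set (Set X)) (hInt : ∀ G ⊆ F, ⋂₀ G ∈ F) {L₀ : Set L}
    (hCl : ∀ S ⊆ L₀, sInf S ∈ L₀) (ψ : (↥F)ᵒᵈ ≃o ↥L₀) :
    {s : Set X | ∃ p : L, s = {x | p ≤ bf F hInt ψ x}} = F := by
  ext s
  constructor
  · rintro ⟨p, rfl⟩
    have hq : sInf {a | a ∈ L₀ ∧ p ≤ a} ∈ L₀ := hCl _ (fun a ha => ha.1)
    obtain ⟨t, ht⟩ := ψ.surjective ⟨_, hq⟩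
    have key : {x | p ≤ bf F hInt ψ x} = {x | (ψ t : L) ≤ bf F hInt ψ x} := by
      ext x
      simp only [Set.mem_setOf_eq, ht]
      constructor
      · intro h
        exact sInf_le ⟨bf_mem F hInt ψ x, h⟩
      · intro h
        exact le_trans (le_sInf (fun a ha => ha.2)) h
    rw [key]
    have h2 := cut_bf F hInt ψ (OrderDual.ofDual t).1 (OrderDual.ofDual t).2
    exact h2.symm ▸ (OrderDual.ofDual t).2
  · intro hs
    exact ⟨ψ (OrderDual.toDual ⟨s, hs⟩), (cut_bf F hInt ψ s hs).symm⟩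

lemma g_bf (F : Set (Set X)) (hInt : ∀ G ⊆ F, ⋂₀ G ∈ F) {L₀ : Set L}
    (hCl : ∀ S ⊆ L₀, sInf S ∈ L₀) (ψ : (↥F)ᵒᵈ ≃o ↥L₀) (s : Set X) (hs : s ∈ F) :
    g (bf F hInt ψ) s = (ψ (OrderDual.toDual ⟨s, hs⟩) : L) := by
  apply le_antisymm
  · have hmem : g (bf F hInt ψ) s ∈ L₀ := by
      apply hCl
      rintro a ⟨x, hx, rfl⟩
      exact bf_mem F hInt ψ x
    obtain ⟨t, ht⟩ := ψ.surjective ⟨_, hmem⟩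
    have hst : s ⊆ ((OrderDual.ofDual t : ↥F) : Set X) := by
      intro x hx
      have h1 : (ψ t : L) ≤ bf F hInt ψ x := by
        rw [ht]; exact g_le _ hx
      have h2 := cut_bf F hInt ψ (OrderDual.ofDual t).1 (OrderDual.ofDual t).2
      exact h2 ▸ h1
    have hle : ψ t ≤ ψ (OrderDual.toDual ⟨s, hs⟩) := by
      rw [ψ.le_iff_le, ← OrderDual.toDual_ofDual t, OrderDual.toDual_le_toDual,
        Subtype.mk_le_mk]
      exact hst
    calc g (bf F hInt ψ) s = (ψ t : L) := (congrArg Subtype.val ht).symm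
      _ ≤ _ := hle
  · apply le_g
    intro x hx
    have h2 := cut_bf F hInt ψ s hs
    rw [← h2] at hx
    exact hx

lemma rng_bf (F : Set (Set X)) (hInt : ∀ G ⊆ F, ⋂₀ G ∈ F) {L₀ : Set L}
    (hCl : ∀ S ⊆ L₀, sInf S ∈ L₀) (ψ : (↥F)ᵒᵈ ≃o ↥L₀) :
    rng (bf F hInt ψ) F = L₀ := by
  ext a
  constructor
  · rintro ⟨s, hs, rfl⟩
    rw [g_bf F hInt hCl ψ s hs]
    exact (ψ _).2
  · intro ha
    obtain ⟨t, ht⟩ := ψ.surjective ⟨a, ha⟩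
    refine ⟨(OrderDual.ofDual t).1, (OrderDual.ofDual t).2, ?_⟩
    rw [g_bf F hInt hCl ψ _ (OrderDual.ofDual t).2]
    exact congrArg Subtype.val ht

lemma bf_g (F : Set (Set X)) {f : X → L}
    (hf : {s : Set X | ∃ p : L, s = {x | p ≤ f x}} = F) (x : X) :
    g f (cl F x) = f x := by
  apply le_antisymm (g_le f (mem_cl F x))
  apply le_g
  intro y hy
  have hmem : {z | f x ≤ f z} ∈ F := by rw [← hf]; exact ⟨f x, rfl⟩
  exact cl_subset F hmem (le_refl (f x)) hy

lemma orderIso_heq {α : Type u} [Preorder α] {A B : Set L} (h : A = B)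
    (e₁ : α ≃o ↥A) (e₂ : α ≃o ↥B) (he : ∀ a, ((e₁ a : L)) = (e₂ a : L)) :
    HEq e₁ e₂ := by
  subst h
  rw [heq_iff_eq]
  exact DFunLike.ext _ _ (fun a => Subtype.ext (he a))

lemma sigma_mk_eq {S : Type u} {B : S → Type u} {p q : S} (h : p = q)
    {x : B p} {y : B q} (hxy : HEq x y) : (⟨p, x⟩ : Σ s, B s) = ⟨q, y⟩ := by
  subst h; rw [heq_iff_eq] at hxy; rw [hxy]

def dualEquiv (α : Type u) [Preorder α] : (αᵒᵈ ≃o αᵒᵈ) ≃ (α ≃o α) where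
  toFun e := e.dual
  invFun e := e.dual
  left_inv _ := rfl
  right_inv _ := rfl

end Card17

/-- `|N(L, F)| = |S(L, F)| · |OI(F)|`. -/
theorem card_n_eq {X L : Type u} [Nonempty X] [CompleteLattice L]
    (F : Set (Set X)) (hXF : Set.univ ∈ F) (hInt : ∀ G ⊆ F, ⋂₀ G ∈ F) :
    Cardinal.mk {f : X → L // {s : Set X | ∃ p : L, s = {x : X | p ≤ f x}} = F} =
      Cardinal.mk {L₀ : Set L // (⊤ ∈ L₀ ∧ ∀ S ⊆ L₀, sInf S ∈ L₀) ∧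
          Nonempty ((↥F)ᵒᵈ ≃o ↥L₀)} *
        Cardinal.mk (↥F ≃o ↥F) := by
  classical
  set S := {L₀ : Set L // (⊤ ∈ L₀ ∧ ∀ S ⊆ L₀, sInf S ∈ L₀) ∧
      Nonempty ((↥F)ᵒᵈ ≃o ↥L₀)} with hS
  -- Step 1: N ≃ Σ p : S, isos
  have e1 : {f : X → L // {s : Set X | ∃ p : L, s = {x : X | p ≤ f x}} = F} ≃
      Σ p : S, ((↥F)ᵒᵈ ≃o ↥(p.1)) :=
    { toFun := fun f =>
        ⟨⟨Card17.rng f.1 F, ⟨⟨Card17.top_mem_rng f.2,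
            fun S hS => Card17.sInf_mem_rng f.2 hS⟩, ⟨Card17.gIso f.1 F f.2⟩⟩⟩,
          Card17.gIso f.1 F f.2⟩
      invFun := fun t => ⟨Card17.bf F hInt t.2, Card17.cuts_bf F hInt t.1.2.1.2 t.2⟩
      left_inv := fun f => by
        apply Subtype.ext
        funext x
        exact Card17.bf_g F f.2 x
      right_inv := fun t => by
        refine Card17.sigma_mk_eq (Subtype.ext ?_) ?_
        · exact Card17.rng_bf F hInt t.1.2.1.2 t.2
        · refine Card17.orderIso_heq (Card17.rng_bf F hInt t.1.2.1.2 t.2) _ t.2 ?_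
          intro s
          exact Card17.g_bf F hInt t.1.2.1.2 t.2 (OrderDual.ofDual s).1
            (OrderDual.ofDual s).2 }
  -- Step 2: sigma ≃ product
  have fib : ∀ p : S, ((↥F)ᵒᵈ ≃o ↥(p.1)) ≃ ((↥F)ᵒᵈ ≃o (↥F)ᵒᵈ) := by
    intro p
    have φ : (↥F)ᵒᵈ ≃o ↥(p.1) := Classical.choice p.2.2
    exact
      { toFun := fun ψ => ψ.trans φ.symm
        invFun := fun e => e.trans φ
        left_inv := fun ψ => by ext a; simp
        right_inv := fun e => by ext a; simp }
  have e2 : (Σ p : S, ((↥F)ᵒᵈ ≃o ↥(p.1))) ≃ S × ((↥F)ᵒᵈ ≃o (↥F)ᵒᵈ) :=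
    (Equiv.sigmaCongrRight fib).trans
      (Equiv.sigmaEquivProd S ((↥F)ᵒᵈ ≃o (↥F)ᵒᵈ))
  have e3 : S × ((↥F)ᵒᵈ ≃o (↥F)ᵒᵈ) ≃ S × (↥F ≃o ↥F) :=
    Equiv.prodCongr (Equiv.refl S) (Card17.dualEquiv ↥F)
  rw [Cardinal.mk_congr ((e1.trans e2).trans e3), Cardinal.mk_prod,
    Cardinal.lift_id, Cardinal.lift_id]
end

section
/- Let F be a family of subsets of a nonempty set X closed under arbitrary intersections with X ∈ F, and let L be a complete lattice. There exists a unique L-fuzzy set μ : X → L whose family of cuts equals F if and only if |S(L, F)| = 1 and |OI(F)| = 1, i.e., there is exactly one subset L₀ ⊆ L whose inclusion into L preserves all infima and the top element and which is order-isomorphic to (F, ⊇), and the poset (F, ⊇) has no nontrivial order automorphisms. -/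
open Set OrderDual

namespace FuzzyAux

variable {X L : Type*} [CompleteLattice L]

/-- The cut family of a fuzzy set. -/
def cuts (μ : X → L) : Set (Set X) := {s : Set X | ∃ p : L, s = {x : X | p ≤ μ x}}

/-- The smallest member of `F` containing `x` (when `F` is intersection-closed). -/
def mf (F : Set (Set X)) (x : X) : Set X := ⋂₀ {s ∈ F | x ∈ s}

variable {F : Set (Set X)}

lemma mf_mem (hInt : ∀ G ⊆ F, ⋂₀ G ∈ F) (x : X) : mf F x ∈ F :=
  hInt _ (sep_subset _ _)

lemma mem_mf (x : X) : x ∈ mf F x := fun s hs => hs.2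

lemma mf_subset {s : Set X} (hs : s ∈ F) {x : X} (hx : x ∈ s) : mf F x ⊆ s :=
  sInter_subset_of_mem ⟨hs, hx⟩

variable {L₀ : Set L}

/-- The fuzzy set built from `L₀ ∈ S(L,F)` and an order isomorphism. -/
def muOf (hInt : ∀ G ⊆ F, ⋂₀ G ∈ F) (ψ : (↥F)ᵒᵈ ≃o ↥L₀) (x : X) : L :=
  (ψ (toDual ⟨mf F x, mf_mem hInt x⟩) : ↥L₀)

lemma muOf_mem (hInt : ∀ G ⊆ F, ⋂₀ G ∈ F) (ψ : (↥F)ᵒᵈ ≃o ↥L₀) (x : X) :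
    muOf hInt ψ x ∈ L₀ := (ψ _).2

lemma mem_iff_le_muOf (hInt : ∀ G ⊆ F, ⋂₀ G ∈ F) (ψ : (↥F)ᵒᵈ ≃o ↥L₀)
    {s : Set X} (hs : s ∈ F) (x : X) :
    x ∈ s ↔ (ψ (toDual ⟨s, hs⟩) : L) ≤ muOf hInt ψ x := by
  constructor
  · intro hx
    have h1 : toDual (⟨s, hs⟩ : ↥F) ≤ toDual ⟨mf F x, mf_mem hInt x⟩ := by
      rw [toDual_le_toDual]
      exact mf_subset hs hx
    exact Subtype.coe_le_coe.mpr (ψ.monotone h1)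
  · intro h
    have h1 : toDual (⟨s, hs⟩ : ↥F) ≤ toDual ⟨mf F x, mf_mem hInt x⟩ :=
      ψ.le_iff_le.mp (Subtype.coe_le_coe.mp h)
    have h2 : mf F x ⊆ s := toDual_le_toDual.mp h1
    exact h2 (mem_mf x)

lemma cuts_muOf (hInt : ∀ G ⊆ F, ⋂₀ G ∈ F) (hinf : ∀ S ⊆ L₀, sInf S ∈ L₀)
    (ψ : (↥F)ᵒᵈ ≃o ↥L₀) : cuts (muOf hInt ψ) = F := by
  ext s
  constructor
  · rintro ⟨p, rfl⟩
    have hq : sInf {r ∈ L₀ | p ≤ r} ∈ L₀ := hinf _ (sep_subset _ _)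
    set t : ↥F := ofDual (ψ.symm ⟨_, hq⟩) with ht
    have hts : (ψ (toDual t) : L) = sInf {r ∈ L₀ | p ≤ r} := by
      simp [ht]
    have key : {x : X | p ≤ muOf hInt ψ x} = t.1 := by
      ext x
      simp only [mem_setOf_eq]
      constructor
      · intro hpx
        have hqle : sInf {r ∈ L₀ | p ≤ r} ≤ muOf hInt ψ x :=
          sInf_le ⟨muOf_mem hInt ψ x, hpx⟩
        have := (mem_iff_le_muOf hInt ψ t.2 x).mpr (by rw [Subtype.eta, hts]; exact hqle)
        exact this
      · intro hx
        have h1 : (ψ (toDual t) : L) ≤ muOf hInt ψ x := by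
          have := (mem_iff_le_muOf hInt ψ t.2 x).mp hx
          rwa [Subtype.eta] at this
        have hpq : p ≤ sInf {r ∈ L₀ | p ≤ r} := le_sInf fun r hr => hr.2
        calc p ≤ sInf {r ∈ L₀ | p ≤ r} := hpq
          _ = (ψ (toDual t) : L) := hts.symm
          _ ≤ muOf hInt ψ x := h1
    rw [key]; exact t.2
  · intro hs
    refine ⟨ψ (toDual ⟨s, hs⟩), ?_⟩
    ext x
    exact mem_iff_le_muOf hInt ψ hs x

lemma sInf_image_muOf (hInt : ∀ G ⊆ F, ⋂₀ G ∈ F) (hinf : ∀ S ⊆ L₀, sInf S ∈ L₀)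
    (ψ : (↥F)ᵒᵈ ≃o ↥L₀) {s : Set X} (hs : s ∈ F) :
    sInf (muOf hInt ψ '' s) = (ψ (toDual ⟨s, hs⟩) : L) := by
  apply le_antisymm
  · have hsub : muOf hInt ψ '' s ⊆ L₀ := by
      rintro _ ⟨x, hx, rfl⟩; exact muOf_mem hInt ψ x
    have hq : sInf (muOf hInt ψ '' s) ∈ L₀ := hinf _ hsub
    set t : ↥F := ofDual (ψ.symm ⟨_, hq⟩) with ht
    have hts : (ψ (toDual t) : L) = sInf (muOf hInt ψ '' s) := by simp [ht]
    have hst : s ⊆ t.1 := by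
      intro y hy
      apply (mem_iff_le_muOf hInt ψ t.2 y).mpr
      rw [Subtype.eta, hts]
      exact sInf_le (mem_image_of_mem _ hy)
    have hle : toDual t ≤ toDual (⟨s, hs⟩ : ↥F) := toDual_le_toDual.mpr hst
    calc sInf (muOf hInt ψ '' s) = (ψ (toDual t) : L) := hts.symm
      _ ≤ (ψ (toDual ⟨s, hs⟩) : L) := Subtype.coe_le_coe.mpr (ψ.monotone hle)
  · exact le_sInf (by rintro _ ⟨x, hx, rfl⟩
                      exact (mem_iff_le_muOf hInt ψ hs x).mp hx)

/-! ### The canonical `L₀` and isomorphism attached to a fuzzy set -/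

def nu (μ : X → L) (s : Set X) : L := sInf (μ '' s)

def canonSet (μ : X → L) (F : Set (Set X)) : Set L := nu μ '' F

lemma cut_nu {μ : X → L} (hc : cuts μ = F) {s : Set X} (hs : s ∈ F) :
    {x : X | nu μ s ≤ μ x} = s := by
  rw [← hc] at hs
  obtain ⟨q, rfl⟩ := hs
  ext x
  simp only [mem_setOf_eq]
  constructor
  · intro h
    have hq : q ≤ nu μ {x | q ≤ μ x} :=
      le_sInf (by rintro _ ⟨y, hy, rfl⟩; exact hy)
    exact hq.trans h
  · intro hx
    exact sInf_le (mem_image_of_mem _ hx)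

lemma nu_le_iff {μ : X → L} (hc : cuts μ = F) {s t : Set X} (hs : s ∈ F) (ht : t ∈ F) :
    nu μ s ≤ nu μ t ↔ t ⊆ s := by
  constructor
  · intro h x hx
    have h1 : nu μ t ≤ μ x := sInf_le (mem_image_of_mem _ hx)
    have h2 : nu μ s ≤ μ x := h.trans h1
    have := cut_nu hc hs
    rw [← this]; exact h2
  · intro h
    exact sInf_le_sInf (image_mono h)

lemma nu_inj {μ : X → L} (hc : cuts μ = F) {s t : Set X} (hs : s ∈ F) (ht : t ∈ F)
    (h : nu μ s = nu μ t) : s = t := by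
  rw [← cut_nu hc hs, ← cut_nu hc ht, h]

lemma top_mem_canonSet {μ : X → L} (hc : cuts μ = F) : ⊤ ∈ canonSet μ F := by
  refine ⟨{x | (⊤ : L) ≤ μ x}, hc ▸ ⟨⊤, rfl⟩, ?_⟩
  exact le_antisymm le_top (le_sInf (by rintro _ ⟨x, hx, rfl⟩; exact hx))

lemma sInf_mem_canonSet {μ : X → L} (hc : cuts μ = F) :
    ∀ S ⊆ canonSet μ F, sInf S ∈ canonSet μ F := by
  intro S hS
  have ht : {x : X | sInf S ≤ μ x} ∈ F := hc ▸ ⟨sInf S, rfl⟩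
  refine ⟨{x : X | sInf S ≤ μ x}, ht, ?_⟩
  apply le_antisymm
  · apply le_sInf
    intro p hp
    obtain ⟨s, hsF, rfl⟩ := hS hp
    apply sInf_le_sInf
    apply image_mono
    intro x hx
    have h1 : nu μ s ≤ μ x := sInf_le (mem_image_of_mem _ hx)
    exact (sInf_le hp).trans h1
  · exact le_sInf (by rintro _ ⟨x, hx, rfl⟩; exact hx)

lemma mu_eq_nu_mf {μ : X → L} (hc : cuts μ = F) (hInt : ∀ G ⊆ F, ⋂₀ G ∈ F) (x : X) :
    μ x = nu μ (mf F x) := by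
  apply le_antisymm
  · apply le_sInf
    rintro _ ⟨y, hy, rfl⟩
    have hcx : {z : X | μ x ≤ μ z} ∈ F := hc ▸ ⟨μ x, rfl⟩
    have : mf F x ⊆ {z : X | μ x ≤ μ z} := mf_subset hcx (le_refl (μ x))
    exact this hy
  · exact sInf_le (mem_image_of_mem _ (mem_mf x))

noncomputable def canonIso (μ : X → L) (hc : cuts μ = F) :
    (↥F)ᵒᵈ ≃o ↥(canonSet μ F) :=
  { Equiv.ofBijective
      (fun s : (↥F)ᵒᵈ => (⟨nu μ (ofDual s).1, mem_image_of_mem _ (ofDual s).2⟩ : ↥(canonSet μ F)))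
      ⟨by
        intro a b hab
        have h : nu μ (ofDual a).1 = nu μ (ofDual b).1 := congrArg Subtype.val hab
        have := nu_inj hc (ofDual a).2 (ofDual b).2 h
        exact toDual.injective (Subtype.ext this),
       by
        rintro ⟨_, s, hsF, rfl⟩
        exact ⟨toDual ⟨s, hsF⟩, rfl⟩⟩ with
    map_rel_iff' := by
      intro a b
      change (nu μ (ofDual a).1 ≤ nu μ (ofDual b).1) ↔ _
      rw [nu_le_iff hc (ofDual a).2 (ofDual b).2]
      exact Iff.rfl }

lemma canonIso_apply (μ : X → L) (hc : cuts μ = F) {s : Set X} (hs : s ∈ F) :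
    (canonIso μ hc (toDual ⟨s, hs⟩) : L) = nu μ s := rfl

/-- Turn an order automorphism of the dual into one of the original. -/
def undual {α : Type*} [Preorder α] (e : αᵒᵈ ≃o αᵒᵈ) : α ≃o α :=
  { toFun := fun a => ofDual (e (toDual a)),
    invFun := fun a => ofDual (e.symm (toDual a)),
    left_inv := fun a => by simp,
    right_inv := fun a => by simp,
    map_rel_iff' := by
      intro a b
      exact e.map_rel_iff (a := toDual b) (b := toDual a) }

end FuzzyAux

open FuzzyAux

/-- there is a unique `L`-fuzzy set on `X` whose family of cuts
equals `F` iff `|S(L, F)| = 1` and `|OI(F)| = 1`. -/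
theorem unique_fuzzy_set_iff {X L : Type*} [Nonempty X] [CompleteLattice L]
    (F : Set (Set X)) (hXF : Set.univ ∈ F) (hInt : ∀ G ⊆ F, ⋂₀ G ∈ F) :
    (∃! μ : X → L, {s : Set X | ∃ p : L, s = {x : X | p ≤ μ x}} = F) ↔
      (∃! L₀ : Set L, (⊤ ∈ L₀ ∧ ∀ S ⊆ L₀, sInf S ∈ L₀) ∧
          Nonempty ((↥F)ᵒᵈ ≃o ↥L₀)) ∧
        ∀ e₁ e₂ : ↥F ≃o ↥F, e₁ = e₂ := by
  constructor
  · rintro ⟨μ, hμ, huniq⟩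
    have hc : cuts μ = F := hμ
    constructor
    · refine ⟨canonSet μ F, ⟨⟨top_mem_canonSet hc, sInf_mem_canonSet hc⟩, ⟨canonIso μ hc⟩⟩, ?_⟩
      rintro L₀' ⟨⟨htop', hinf'⟩, ⟨ψ'⟩⟩
      have hc' : cuts (muOf hInt ψ') = F := cuts_muOf hInt hinf' ψ'
      have hμeq : muOf hInt ψ' = μ := huniq _ hc'
      have hL : L₀' = canonSet (muOf hInt ψ') F := by
        apply Set.Subset.antisymm
        · intro q hq
          set t : ↥F := OrderDual.ofDual (ψ'.symm ⟨q, hq⟩) with ht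
          have h1 : (ψ' (OrderDual.toDual t) : L) = q := by simp [ht]
          have h2 : sInf (muOf hInt ψ' '' t.1) = (ψ' (OrderDual.toDual t) : L) := by
            have := sInf_image_muOf hInt hinf' ψ' t.2
            rwa [Subtype.eta] at this
          exact ⟨t.1, t.2, h2.trans h1⟩
        · rintro _ ⟨s, hsF, rfl⟩
          show sInf (muOf hInt ψ' '' s) ∈ L₀'
          rw [sInf_image_muOf hInt hinf' ψ' hsF]
          exact (ψ' _).2
      rw [hL, hμeq]
    · have key : ∀ e : ↥F ≃o ↥F, ∀ a : ↥F, e a = a := by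
        intro e a
        set ψe := (OrderIso.dual e).trans (canonIso μ hc) with hψe
        have hce : cuts (muOf hInt ψe) = F :=
          cuts_muOf hInt (sInf_mem_canonSet hc) ψe
        have hμeq : muOf hInt ψe = μ := huniq _ hce
        have h1 : sInf (muOf hInt ψe '' a.1) = (ψe (OrderDual.toDual a) : L) := by
          have := sInf_image_muOf hInt (sInf_mem_canonSet hc) ψe a.2
          rwa [Subtype.eta] at this
        have h2 : (ψe (OrderDual.toDual a) : L) = nu μ (e a).1 := rfl
        have h3 : nu μ a.1 = nu μ (e a).1 := by
          rw [← h2, ← h1, hμeq]; rfl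
        exact Subtype.ext (nu_inj hc a.2 (e a).2 h3).symm
      intro e₁ e₂
      exact DFunLike.ext e₁ e₂ fun a => (key e₁ a).trans (key e₂ a).symm
  · rintro ⟨⟨L₀, ⟨⟨htop, hinf⟩, ⟨ψ⟩⟩, hLuniq⟩, hOI⟩
    refine ⟨muOf hInt ψ, cuts_muOf hInt hinf ψ, ?_⟩
    intro μ' hμ'
    set μ : X → L := muOf hInt ψ with hμdef
    have hc : cuts μ = F := cuts_muOf hInt hinf ψ
    have hc' : cuts μ' = F := hμ'
    have hA : canonSet μ' F = L₀ :=
      hLuniq _ ⟨⟨top_mem_canonSet hc', sInf_mem_canonSet hc'⟩, ⟨canonIso μ' hc'⟩⟩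
    have hB : canonSet μ F = L₀ :=
      hLuniq _ ⟨⟨top_mem_canonSet hc, sInf_mem_canonSet hc⟩, ⟨canonIso μ hc⟩⟩
    have hset : canonSet μ' F = canonSet μ F := hA.trans hB.symm
    set e' : (↥F)ᵒᵈ ≃o (↥F)ᵒᵈ :=
      (canonIso μ' hc').trans ((OrderIso.setCongr _ _ hset).trans (canonIso μ hc).symm)
      with he'
    have he : undual e' = OrderIso.refl ↥F := hOI _ _
    have hnu : ∀ s : ↥F, nu μ' s.1 = nu μ s.1 := by
      intro s
      have h1 : undual e' s = s := by rw [he]; rfl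
      have h2 : e' (OrderDual.toDual s) = OrderDual.toDual s := h1
      have h3 := congrArg (fun a : (↥F)ᵒᵈ => ((canonIso μ hc) a : L)) h2
      simp only [he', OrderIso.trans_apply, OrderIso.apply_symm_apply] at h3
      exact h3
    funext x
    rw [mu_eq_nu_mf hc' hInt x, mu_eq_nu_mf hc hInt x,
      hnu ⟨_, mf_mem hInt x⟩]
end
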